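/- Let X₁, X₂, … be iid random vectors in ℝ^d with distribution P_X supported on S. Let Q ⊆ S be compact and standard with respect to the restriction of P_X to Q, with P_X(Q) > 0. If (h_l) is a sequence with h_l → 0 and l h_l^d / log(l) → ∞, then almost surely, for all sufficiently large l, Q is covered by the union of the balls B(X,h_l/2) over X ∈ {X₁,…,X_l} ∩ Q. -/

import Mathlib

open Metric MeasureTheory Filter
open scoped ENNReal

lemma packing_lemma {d : ℕ} (hd : 0 < d) (Q : Set (EuclideanSpace ℝ (Fin d)))
    (hQ : IsCompact Q) :
    ∃ C : ℝ, 0 < C ∧ ∀ r : ℝ, 0 < r → r ≤ 1 →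
      ∃ t : Finset (EuclideanSpace ℝ (Fin d)), (↑t : Set _) ⊆ Q ∧
        (Q ⊆ ⋃ y ∈ t, ball y r) ∧ (t.card : ℝ) * r ^ d ≤ C := by
  haveI : Nonempty (Fin d) := Fin.pos_iff_nonempty.mp hd
  set κr : ℝ := Real.sqrt Real.pi ^ d / Real.Gamma (d / 2 + 1) with hκr
  have hκpos : 0 < κr := by
    apply div_pos (pow_pos (Real.sqrt_pos.mpr Real.pi_pos) d)
    exact Real.Gamma_pos_of_pos (by positivity)
  have hvol : ∀ (x : EuclideanSpace ℝ (Fin d)) (r : ℝ), 0 ≤ r →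
      volume (ball x r) = ENNReal.ofReal (r ^ d * κr) := by
    intro x r hr
    rw [EuclideanSpace.volume_ball, Fintype.card_fin, ENNReal.ofReal_mul (by positivity),
      ENNReal.ofReal_pow hr]
  set V : ℝ≥0∞ := volume (Metric.cthickening 1 Q) with hV
  have hVfin : V ≠ ⊤ := (IsCompact.cthickening hQ).measure_lt_top.ne
  refine ⟨3 ^ d * V.toReal / κr + 1, by positivity, ?_⟩
  intro r hr hr1
  obtain ⟨t₀s, ht₀Q, ht₀fin, ht₀cov⟩ := hQ.finite_cover_balls (e := r / 3) (by positivity)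
  set t₀ : Finset (EuclideanSpace ℝ (Fin d)) := ht₀fin.toFinset with ht₀
  have ht₀mem : ∀ x, x ∈ t₀ ↔ x ∈ t₀s := fun x => ht₀fin.mem_toFinset
  -- maximal separated subset
  set sep : Finset (EuclideanSpace ℝ (Fin d)) → Prop :=
    fun u => ∀ a ∈ u, ∀ b ∈ u, a ≠ b → 2 * r / 3 ≤ dist a b with hsep
  classical
  have hne : (t₀.powerset.filter sep).Nonempty :=
    ⟨∅, Finset.mem_filter.mpr ⟨Finset.mem_powerset.mpr (Finset.empty_subset _),
      fun a ha => absurd ha (Finset.notMem_empty a)⟩⟩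
  obtain ⟨u, hu, humax⟩ := Finset.exists_max_image (t₀.powerset.filter sep) Finset.card hne
  rw [Finset.mem_filter, Finset.mem_powerset] at hu
  obtain ⟨hut₀, husep⟩ := hu
  have huQ : (↑u : Set _) ⊆ Q := fun x hx => ht₀Q ((ht₀mem x).mp (hut₀ hx))
  -- every point of t₀ is close to u
  have hclose : ∀ y ∈ t₀, ∃ z ∈ u, dist y z < 2 * r / 3 := by
    intro y hy
    by_contra hcon
    push_neg at hcon
    have hynu : y ∉ u := fun hyu => absurd (hcon y hyu) (by simp; positivity)
    have hins : insert y u ∈ t₀.powerset.filter sep := by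
      rw [Finset.mem_filter, Finset.mem_powerset]
      constructor
      · exact Finset.insert_subset hy hut₀
      · intro a ha b hb hab
        rcases Finset.mem_insert.mp ha with ha' | ha' <;>
          rcases Finset.mem_insert.mp hb with hb' | hb'
        · exact absurd (ha'.trans hb'.symm) hab
        · subst ha'; exact hcon b hb'
        · subst hb'; rw [dist_comm]; exact hcon a ha'
        · exact husep a ha' b hb' hab
    have := humax _ hins
    rw [Finset.card_insert_of_notMem hynu] at this
    omega
  have hcov : Q ⊆ ⋃ y ∈ u, ball y r := by
    intro x hx
    obtain ⟨y, hy, hxy⟩ := Set.mem_iUnion₂.mp (ht₀cov hx)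
    obtain ⟨z, hz, hyz⟩ := hclose y ((ht₀mem y).mpr hy)
    refine Set.mem_iUnion₂.mpr ⟨z, hz, ?_⟩
    rw [mem_ball] at hxy ⊢
    calc dist x z ≤ dist x y + dist y z := dist_triangle _ _ _
    _ < r / 3 + 2 * r / 3 := by linarith
    _ = r := by ring
  -- cardinality bound via volumes
  have hdisj : (↑u : Set (EuclideanSpace ℝ (Fin d))).PairwiseDisjoint (fun z => ball z (r / 3)) := by
    intro z₁ h₁ z₂ h₂ hne12
    apply Set.disjoint_left.mpr
    intro w hw1 hw2
    rw [mem_ball] at hw1 hw2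
    have := husep z₁ h₁ z₂ h₂ hne12
    have : dist z₁ z₂ ≤ dist z₁ w + dist w z₂ := dist_triangle _ _ _
    rw [dist_comm z₁ w] at this
    linarith [husep z₁ h₁ z₂ h₂ hne12]
  have hsub : (⋃ z ∈ u, ball z (r / 3)) ⊆ Metric.cthickening 1 Q := by
    refine Set.iUnion₂_subset fun z hz => ?_
    intro w hw
    rw [mem_ball] at hw
    apply Metric.mem_cthickening_of_dist_le w z 1 Q (huQ hz)
    linarith
  have hvolsum : (u.card : ℝ≥0∞) * ENNReal.ofReal ((r / 3) ^ d * κr) ≤ V := by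
    calc (u.card : ℝ≥0∞) * ENNReal.ofReal ((r / 3) ^ d * κr)
        = ∑ z ∈ u, volume (ball z (r / 3)) := by
          rw [Finset.sum_congr rfl (fun z _ => hvol z (r/3) (by positivity)),
            Finset.sum_const, nsmul_eq_mul]
      _ = volume (⋃ z ∈ u, ball z (r / 3)) :=
          (measure_biUnion_finset hdisj (fun z _ => measurableSet_ball)).symm
      _ ≤ V := measure_mono hsub
  -- to real
  have hcard : (u.card : ℝ) * ((r / 3) ^ d * κr) ≤ V.toReal := by
    have h1 : ((u.card : ℝ≥0∞) * ENNReal.ofReal ((r / 3) ^ d * κr)).toReal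
        = (u.card : ℝ) * ((r / 3) ^ d * κr) := by
      rw [ENNReal.toReal_mul, ENNReal.toReal_ofReal (by positivity)]
      norm_num
    rw [← h1]
    exact ENNReal.toReal_mono hVfin hvolsum
  refine ⟨u, huQ, hcov, ?_⟩
  have h3 : (u.card : ℝ) * r ^ d ≤ 3 ^ d * V.toReal / κr := by
    rw [le_div_iff₀ hκpos]
    have h2 : (u.card : ℝ) * ((r / 3) ^ d * κr) * 3 ^ d ≤ V.toReal * 3 ^ d :=
      mul_le_mul_of_nonneg_right hcard (by positivity)
    calc (u.card : ℝ) * r ^ d * κr = (u.card : ℝ) * ((r / 3) ^ d * κr) * 3 ^ d := by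
          rw [div_pow]; field_simp
      _ ≤ V.toReal * 3 ^ d := h2
      _ = 3 ^ d * V.toReal := by ring
  linarith

/-- `S` is standard with respect to `μ` with constants `β, λ`. -/
def IsStandard {d : ℕ} (μ : Measure (EuclideanSpace ℝ (Fin d)))
    (S : Set (EuclideanSpace ℝ (Fin d))) (β lam : ℝ) : Prop :=
  0 < lam ∧ ∀ x ∈ S, ∀ ε : ℝ, 0 < ε → ε ≤ lam →
    ENNReal.ofReal β * volume (Metric.ball x ε) ≤ μ (Metric.ball x ε ∩ S)

lemma one_sub_ofReal_le_exp {a : ℝ} (ha : 0 ≤ a) :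
    (1 : ℝ≥0∞) - ENNReal.ofReal a ≤ ENNReal.ofReal (Real.exp (-a)) := by
  rw [tsub_le_iff_right, ← ENNReal.ofReal_add (Real.exp_nonneg _) ha,
    show (1:ℝ≥0∞) = ENNReal.ofReal 1 by simp]
  exact ENNReal.ofReal_le_ofReal (by nlinarith [Real.add_one_le_exp (-a)])

set_option maxHeartbeats 1000000 in
theorem covering_lemma {d : ℕ} {Ω : Type*} [MeasurableSpace Ω]
    (μ : Measure Ω) [IsProbabilityMeasure μ]
    (X : ℕ → Ω → EuclideanSpace ℝ (Fin d)) (hX : ∀ i, Measurable (X i))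
    (PX : Measure (EuclideanSpace ℝ (Fin d)))
    (hiid : ProbabilityTheory.iIndepFun X μ)
    (hdist : ∀ i, Measure.map (X i) μ = PX)
    (S Q : Set (EuclideanSpace ℝ (Fin d)))
    (hsupp : PX Sᶜ = 0) (hQS : Q ⊆ S) (hQcomp : IsCompact Q)
    (hQpos : 0 < PX Q)
    (β lam : ℝ) (hβ : 0 < β)
    (hstd : IsStandard ((PX Q)⁻¹ • PX.restrict Q) Q β lam)
    (h : ℕ → ℝ) (hpos : ∀ l, 0 < h l)
    (h0 : Tendsto h atTop (nhds 0))
    (hrate : Tendsto (fun l : ℕ => (l : ℝ) * (h l) ^ d / Real.log l) atTop atTop) :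
    ∀ᵐ ω ∂μ, ∃ L : ℕ, ∀ l ≥ L,
      Q ⊆ ⋃ i ∈ Finset.range l, ⋃ (_ : X i ω ∈ Q), Metric.ball (X i ω) (h l / 2) := by
  classical
  rcases Nat.eq_zero_or_pos d with hd0 | hd
  · -- degenerate case d = 0 : the space is a single point
    subst hd0
    haveI : Subsingleton (EuclideanSpace ℝ (Fin 0)) := ⟨fun a b => PiLp.ext fun i => i.elim0⟩
    obtain ⟨x0, hx0⟩ := nonempty_of_measure_ne_zero hQpos.ne'
    refine ae_of_all _ fun ω => ⟨1, fun l hl x hx => ?_⟩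
    have hX0 : X 0 ω ∈ Q := by rwa [Subsingleton.elim (X 0 ω) x0]
    refine Set.mem_iUnion₂.mpr ⟨0, Finset.mem_range.mpr (by omega), Set.mem_iUnion.mpr ⟨hX0, ?_⟩⟩
    rw [mem_ball, Subsingleton.elim x (X 0 ω), dist_self]
    have := hpos l; linarith
  -- main case d > 0
  haveI : Nonempty (Fin d) := Fin.pos_iff_nonempty.mp hd
  haveI PXprob : IsProbabilityMeasure PX := by
    rw [← hdist 0]; exact Measure.isProbabilityMeasure_map (hX 0).aemeasurable
  obtain ⟨hlam, hstd2⟩ := hstd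
  set κr : ℝ := Real.sqrt Real.pi ^ d / Real.Gamma (d / 2 + 1) with hκr
  have hκpos : 0 < κr := by
    apply div_pos (pow_pos (Real.sqrt_pos.mpr Real.pi_pos) d)
    exact Real.Gamma_pos_of_pos (by positivity)
  have hvol : ∀ (x : EuclideanSpace ℝ (Fin d)) (r : ℝ), 0 ≤ r →
      volume (ball x r) = ENNReal.ofReal (r ^ d * κr) := by
    intro x r hr
    rw [EuclideanSpace.volume_ball, Fintype.card_fin, ENNReal.ofReal_mul (by positivity),
      ENNReal.ofReal_pow hr]
  set pq : ℝ := (PX Q).toReal with hpqdef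
  have hpq : 0 < pq := ENNReal.toReal_pos hQpos.ne' (measure_ne_top _ _)
  obtain ⟨C, hC, hpack⟩ := packing_lemma hd Q hQcomp
  -- choose the covers
  have hex : ∀ l : ℕ, ∃ t : Finset (EuclideanSpace ℝ (Fin d)), (h l / 4 ≤ 1 →
      ((↑t : Set _) ⊆ Q ∧ (Q ⊆ ⋃ y ∈ t, ball y (h l / 4)) ∧
        (t.card : ℝ) * (h l / 4) ^ d ≤ C)) := by
    intro l
    by_cases hc : h l / 4 ≤ 1
    · obtain ⟨t, h1, h2, h3⟩ := hpack (h l / 4) (by have := hpos l; positivity) hc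
      exact ⟨t, fun _ => ⟨h1, h2, h3⟩⟩
    · exact ⟨∅, fun hc' => absurd hc' hc⟩
  choose t ht using hex
  set A : ℕ → Set Ω := fun l =>
    ⋃ y ∈ t l, ⋂ i ∈ Finset.range l, X i ⁻¹' ((ball y (h l / 4) ∩ Q)ᶜ) with hA
  have hmeasC : ∀ (y : EuclideanSpace ℝ (Fin d)) (r : ℝ), MeasurableSet (ball y r ∩ Q) :=
    fun y r => measurableSet_ball.inter hQcomp.isClosed.measurableSet
  -- probability of missing a fixed set with all l points
  have hEvent : ∀ (l : ℕ) (y : EuclideanSpace ℝ (Fin d)),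
      μ (⋂ i ∈ Finset.range l, X i ⁻¹' ((ball y (h l / 4) ∩ Q)ᶜ))
        = (1 - PX (ball y (h l / 4) ∩ Q)) ^ l := by
    intro l y
    rw [hiid.meas_biInter (fun i _ => ⟨(ball y (h l / 4) ∩ Q)ᶜ, (hmeasC y _).compl, rfl⟩)]
    have hone : ∀ i : ℕ, μ (X i ⁻¹' ((ball y (h l / 4) ∩ Q)ᶜ))
        = 1 - PX (ball y (h l / 4) ∩ Q) := by
      intro i
      rw [← Measure.map_apply (hX i) (hmeasC y _).compl, hdist i,
        prob_compl_eq_one_sub (hmeasC y _)]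
    rw [Finset.prod_congr rfl (fun i _ => hone i), Finset.prod_const, Finset.card_range]
  -- lower bound for the probability of a small ball
  set c0 : ℝ := pq * β * κr / 4 ^ d with hc0
  have hc0pos : 0 < c0 := by positivity
  have hlow : ∀ l : ℕ, h l / 4 ≤ lam → ∀ y ∈ Q,
      ENNReal.ofReal (c0 * h l ^ d) ≤ PX (ball y (h l / 4) ∩ Q) := by
    intro l hrlam y hyQ
    have hrpos : 0 < h l / 4 := by have := hpos l; positivity
    have hstd' := hstd2 y hyQ (h l / 4) hrpos hrlam
    rw [Measure.smul_apply, smul_eq_mul, Measure.restrict_apply (hmeasC y _),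
      Set.inter_assoc, Set.inter_self] at hstd'
    have hmul := mul_le_mul_right hstd' (PX Q)
    rw [show PX Q * ((PX Q)⁻¹ * PX (ball y (h l / 4) ∩ Q))
        = PX Q * (PX Q)⁻¹ * PX (ball y (h l / 4) ∩ Q) from (mul_assoc _ _ _).symm,
      ENNReal.mul_inv_cancel hQpos.ne' (measure_ne_top _ _), one_mul] at hmul
    have harg : c0 * h l ^ d = pq * (β * ((h l / 4) ^ d * κr)) := by
      rw [hc0, div_pow]; field_simp
    calc ENNReal.ofReal (c0 * h l ^ d)
        = ENNReal.ofReal pq * (ENNReal.ofReal β * ENNReal.ofReal ((h l / 4) ^ d * κr)) := by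
          rw [harg, ENNReal.ofReal_mul hpq.le, ENNReal.ofReal_mul hβ.le]
      _ = PX Q * (ENNReal.ofReal β * volume (ball y (h l / 4))) := by
          rw [hpqdef, ENNReal.ofReal_toReal (measure_ne_top _ _), hvol y _ hrpos.le]
      _ ≤ PX (ball y (h l / 4) ∩ Q) := hmul
  -- eventual quantitative regime
  have hev1 : ∀ᶠ l : ℕ in atTop, h l ≤ 4 :=
    h0.eventually (eventually_le_nhds (by norm_num))
  have hev2 : ∀ᶠ l : ℕ in atTop, h l ≤ 4 * lam :=
    h0.eventually (eventually_le_nhds (by positivity))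
  have hev3 : ∀ᶠ l : ℕ in atTop, 3 / c0 ≤ (l : ℝ) * h l ^ d / Real.log l :=
    hrate.eventually_ge_atTop _
  have hev4 : ∀ᶠ l : ℕ in atTop, 1 ≤ Real.log l := by
    filter_upwards [eventually_ge_atTop 3] with l hl
    have h3 : (3 : ℝ) ≤ (l : ℝ) := by exact_mod_cast hl
    rw [Real.le_log_iff_exp_le (by linarith)]
    have := Real.exp_one_lt_d9
    linarith
  -- collect the eventual facts
  obtain ⟨N, hN⟩ := eventually_atTop.mp
    ((hev1.and (hev2.and (hev3.and hev4))).and (eventually_ge_atTop 3))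
  have hfacts : ∀ l, N ≤ l → h l / 4 ≤ 1 ∧ h l / 4 ≤ lam ∧ 3 ≤ l ∧ 1 ≤ Real.log l ∧
      3 * Real.log l ≤ (l : ℝ) * (c0 * h l ^ d) := by
    intro l hl
    obtain ⟨⟨e1, e2, e3, e4⟩, e5⟩ := hN l hl
    refine ⟨by linarith, by linarith, e5, e4, ?_⟩
    have hlogpos : 0 < Real.log l := by linarith
    rw [le_div_iff₀ hlogpos] at e3
    have e6 := mul_le_mul_of_nonneg_left e3 hc0pos.le
    calc 3 * Real.log l = c0 * (3 / c0 * Real.log l) := by field_simp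
      _ ≤ c0 * ((l : ℝ) * h l ^ d) := e6
      _ = (l : ℝ) * (c0 * h l ^ d) := by ring
  set C2 : ℝ := C * c0 * 4 ^ d / 3 with hC2
  -- key quantitative bound
  have hkey : ∀ l, N ≤ l → μ (A l) ≤ ENNReal.ofReal (C2 / (l : ℝ) ^ 2) := by
    intro l hl
    obtain ⟨f1, f2, f3, f4, f5⟩ := hfacts l hl
    obtain ⟨htQ, htcov, htcard⟩ := ht l f1
    have hlpos : (0 : ℝ) < l := by
      have : (3:ℝ) ≤ (l:ℝ) := by exact_mod_cast f3
      linarith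
    have hhd : 0 < h l ^ d := pow_pos (hpos l) d
    have hterm : ∀ y ∈ t l, μ (⋂ i ∈ Finset.range l, X i ⁻¹' ((ball y (h l / 4) ∩ Q)ᶜ))
        ≤ ENNReal.ofReal (Real.exp (-((l : ℝ) * (c0 * h l ^ d)))) := by
      intro y hy
      rw [hEvent l y]
      have hq := hlow l f2 y (htQ hy)
      calc (1 - PX (ball y (h l / 4) ∩ Q)) ^ l
          ≤ (ENNReal.ofReal (Real.exp (-(c0 * h l ^ d)))) ^ l :=
            pow_le_pow_left' (le_trans (tsub_le_tsub_left hq 1)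
              (one_sub_ofReal_le_exp (by positivity))) l
        _ = ENNReal.ofReal (Real.exp (-(c0 * h l ^ d)) ^ l) :=
            (ENNReal.ofReal_pow (Real.exp_nonneg _) l).symm
        _ = ENNReal.ofReal (Real.exp (-((l : ℝ) * (c0 * h l ^ d)))) := by
            rw [← Real.exp_nat_mul, mul_neg]
    have hcard : ((t l).card : ℝ) ≤ C * c0 * 4 ^ d * l / 3 := by
      have e1 : ((t l).card : ℝ) * 3 ≤ ((t l).card : ℝ) * ((l : ℝ) * (c0 * h l ^ d)) := by
        apply mul_le_mul_of_nonneg_left _ (Nat.cast_nonneg _)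
        linarith
      have e2 : ((t l).card : ℝ) * ((l : ℝ) * (c0 * h l ^ d))
          = (((t l).card : ℝ) * (h l / 4) ^ d) * ((l : ℝ) * c0 * 4 ^ d) := by
        rw [div_pow]; field_simp
      have e3 : (((t l).card : ℝ) * (h l / 4) ^ d) * ((l : ℝ) * c0 * 4 ^ d)
          ≤ C * ((l : ℝ) * c0 * 4 ^ d) :=
        mul_le_mul_of_nonneg_right htcard (by positivity)
      nlinarith [e1, e2, e3]
    have hexp : Real.exp (-((l : ℝ) * (c0 * h l ^ d))) ≤ ((l : ℝ)⁻¹) ^ 3 := by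
      calc Real.exp (-((l : ℝ) * (c0 * h l ^ d))) ≤ Real.exp (-(3 * Real.log l)) :=
            Real.exp_le_exp.mpr (by linarith)
        _ = Real.exp (-(Real.log l)) ^ 3 := by
            rw [← Real.exp_nat_mul]; norm_num
        _ = ((l : ℝ)⁻¹) ^ 3 := by rw [Real.exp_neg, Real.exp_log hlpos]
    calc μ (A l) ≤ ∑ y ∈ t l, μ (⋂ i ∈ Finset.range l, X i ⁻¹' ((ball y (h l / 4) ∩ Q)ᶜ)) :=
          measure_biUnion_finset_le _ _
      _ ≤ ∑ _y ∈ t l, ENNReal.ofReal (Real.exp (-((l : ℝ) * (c0 * h l ^ d)))) :=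
          Finset.sum_le_sum hterm
      _ = ENNReal.ofReal (((t l).card : ℝ) * Real.exp (-((l : ℝ) * (c0 * h l ^ d)))) := by
          rw [Finset.sum_const, nsmul_eq_mul, ← ENNReal.ofReal_natCast ((t l).card),
            ← ENNReal.ofReal_mul (Nat.cast_nonneg _)]
      _ ≤ ENNReal.ofReal (C2 / (l : ℝ) ^ 2) := by
          apply ENNReal.ofReal_le_ofReal
          have hprod : ((t l).card : ℝ) * Real.exp (-((l : ℝ) * (c0 * h l ^ d)))
              ≤ (C * c0 * 4 ^ d * l / 3) * ((l : ℝ)⁻¹) ^ 3 :=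
            mul_le_mul hcard hexp (Real.exp_nonneg _) (by positivity)
          calc ((t l).card : ℝ) * Real.exp (-((l : ℝ) * (c0 * h l ^ d)))
              ≤ (C * c0 * 4 ^ d * l / 3) * ((l : ℝ)⁻¹) ^ 3 := hprod
            _ = C2 / (l : ℝ) ^ 2 := by rw [hC2]; field_simp
  -- summability of the bad-event probabilities
  have hC2nonneg : 0 ≤ C2 := by rw [hC2]; positivity
  have hbound : ∀ l, μ (A l) ≤ (if l < N then (1:ℝ≥0∞) else 0) + ENNReal.ofReal (C2 / (l:ℝ)^2) := by
    intro l
    by_cases hc : l < N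
    · simp only [hc, if_true]
      exact le_add_right prob_le_one
    · simp only [hc, if_false, zero_add]
      exact hkey l (by omega)
  have hsum : ∑' l, μ (A l) ≠ ⊤ := by
    have h1 := ENNReal.tsum_le_tsum hbound
    rw [ENNReal.tsum_add] at h1
    have h2 : ∑' l : ℕ, (if l < N then (1:ℝ≥0∞) else 0)
        = ∑ l ∈ Finset.range N, (if l < N then (1:ℝ≥0∞) else 0) := by
      apply tsum_eq_sum
      intro b hb
      rw [Finset.mem_range] at hb
      simp [hb]
    have h3 : ∑' l : ℕ, ENNReal.ofReal (C2 / (l:ℝ)^2) ≠ ⊤ := by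
      have h4 : Summable (fun n : ℕ => C2 / (n : ℝ) ^ 2) := by
        have h5 := Real.summable_one_div_nat_pow.mpr (by norm_num : 1 < 2)
        simpa [div_eq_mul_inv, one_div] using h5.mul_left C2
      rw [← ENNReal.ofReal_tsum_of_nonneg
        (fun i => div_nonneg hC2nonneg (sq_nonneg _)) h4]
      exact ENNReal.ofReal_ne_top
    refine ne_top_of_le_ne_top (ENNReal.add_ne_top.mpr ⟨?_, h3⟩) h1
    rw [h2]
    exact ne_top_of_le_ne_top (ENNReal.natCast_ne_top N)
      (le_trans (Finset.sum_le_sum fun i _ => by split; exacts [le_rfl, zero_le_one]) (by simp))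
  -- Borel–Cantelli and conclusion
  have hBC := MeasureTheory.ae_finite_setOf_mem (μ := μ) hsum
  filter_upwards [hBC] with ω hω
  obtain ⟨M, hM⟩ := hω.bddAbove
  refine ⟨max (M + 1) N, fun l hl x hx => ?_⟩
  have hlN : N ≤ l := le_trans (le_max_right _ _) hl
  have hlM : M + 1 ≤ l := le_trans (le_max_left _ _) hl
  have hnotA : ω ∉ A l := fun hmem => by
    have := hM hmem; omega
  obtain ⟨f1, -, -, -, -⟩ := hfacts l hlN
  obtain ⟨htQ, htcov, -⟩ := ht l f1
  obtain ⟨y, hy, hxy⟩ := Set.mem_iUnion₂.mp (htcov hx)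
  have hnot : ¬ (∀ i ∈ Finset.range l, X i ω ∈ (ball y (h l / 4) ∩ Q)ᶜ) := by
    intro hall
    exact hnotA (Set.mem_iUnion₂.mpr ⟨y, hy, Set.mem_iInter₂.mpr hall⟩)
  push_neg at hnot
  obtain ⟨i, hi, hXi⟩ := hnot
  rw [Set.notMem_compl_iff] at hXi
  refine Set.mem_iUnion₂.mpr ⟨i, hi, Set.mem_iUnion.mpr ⟨hXi.2, ?_⟩⟩
  rw [mem_ball] at hxy ⊢
  have hb := mem_ball.mp hXi.1
  have htri := dist_triangle x y (X i ω)
  have hcomm : dist y (X i ω) = dist (X i ω) y := dist_comm _ _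
  linarith
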